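/- The cyclic algebra A = (ℚ(ζ₇ + ζ₇^{-1}, ζ₃)/ℚ(ζ₃), σ, ζ₃), where σ: ζ₇ + ζ₇^{-1} ↦ ζ₇² + ζ₇^{-2} generates Gal(L/ℚ(ζ₃)), is a division algebra; equivalently, neither ζ₃ nor ζ₃² is a norm from L = ℚ(ζ₇ + ζ₇^{-1}, ζ₃) to ℚ(ζ₃). -/

import Mathlib

open Polynomial

instance fact7 : Fact (Nat.Prime 7) := ⟨by norm_num⟩

/-- the norm form of `ℚ(ζ₇)⁺/ℚ` in the power basis of `θ = ζ₇ + ζ₇⁻¹`. -/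
def normForm {R : Type*} [CommRing R] (a b c : R) : R :=
  a^3 - a^2*b + 5*a^2*c - 2*a*b^2 - a*b*c + 6*a*c^2 + b^3 - b^2*c - 2*b*c^2 + c^3

/-- the norm form in the basis of `π = θ - 2`. -/
def normFormPi {R : Type*} [CommRing R] (e f g : R) : R :=
  e^3 - 7*e^2*f + 21*e^2*g + 14*e*f^2 - 77*e*f*g + 98*e*g^2 - 7*f^3 + 49*f^2*g
    - 98*f*g^2 + 49*g^3

lemma seven_dvd_of_dvd_cube {x : ℤ_[7]} (h : (7:ℤ_[7]) ∣ x^3) : (7:ℤ_[7]) ∣ x := by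
  have h7 : ((7:ℕ):ℤ_[7]) = (7:ℤ_[7]) := by norm_cast
  have hp : Prime (7:ℤ_[7]) := by rw [← h7]; exact PadicInt.prime_p
  exact hp.dvd_of_dvd_pow h

lemma seven_ne_zero : (7:ℤ_[7]) ≠ 0 := by
  have : ((7:ℕ):ℤ_[7]) ≠ 0 := Nat.cast_ne_zero.mpr (by norm_num)
  simpa using this

lemma cube_ne_cuberoot (X T : ZMod 7) (hT : T^2 + T + 1 = 0) : X^3 ≠ T := by
  revert X T; decide

lemma padic_key (w : ℤ_[7]) (hw : w^2 + w + 1 = 0) :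
    ∀ (n : ℕ) (a b c : ℤ_[7]), normForm a b c ≠ 7^(3*n) * w := by
  intro n
  induction n with
  | zero =>
    intro a b c h
    simp only [Nat.mul_zero, pow_zero, one_mul] at h
    set u : ℤ_[7] := a + 2*b + 4*c with hu
    have key : normForm a b c = u^3 + 7*(-9*c^3 - 14*b*c^2 - 7*b^2*c - b^3
        - 6*a*c^2 - 7*a*b*c - 2*a*b^2 - a^2*c - a^2*b) := by
      simp only [normForm, hu]; ring
    rw [key] at h
    have h2 := congrArg (PadicInt.toZMod : ℤ_[7] →+* ZMod 7) h
    have hw2 := congrArg (PadicInt.toZMod : ℤ_[7] →+* ZMod 7) hw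
    simp only [map_add, map_mul, map_pow, map_sub, map_neg, map_one, map_ofNat,
      map_zero] at h2 hw2
    rw [show ((7:ZMod 7)) = 0 by decide, zero_mul, add_zero] at h2
    exact cube_ne_cuberoot _ _ hw2 h2
  | succ n ih =>
    intro a b c h
    have h' : normFormPi (a+2*b+4*c) (b+4*c) c = 343 * (7^(3*n) * w) := by
      have h2 : normFormPi (a+2*b+4*c) (b+4*c) c = normForm a b c := by
        simp only [normForm, normFormPi]; ring
      rw [h2, h]; ring
    -- step 1 : 7 ∣ e
    have he3 : (a+2*b+4*c)^3 = 7 * (49 * (7^(3*n) * w) - (7*c^3 - 14*(b+4*c)*c^2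
        + 7*(b+4*c)^2*c - (b+4*c)^3 + 14*(a+2*b+4*c)*c^2 - 11*(a+2*b+4*c)*(b+4*c)*c
        + 2*(a+2*b+4*c)*(b+4*c)^2 + 3*(a+2*b+4*c)^2*c - (a+2*b+4*c)^2*(b+4*c))) := by
      simp only [normFormPi] at h'
      linear_combination h'
    obtain ⟨e1, he⟩ : (7:ℤ_[7]) ∣ (a+2*b+4*c) := seven_dvd_of_dvd_cube ⟨_, he3⟩
    -- step 2 : 7 ∣ f
    have h2 : normFormPi (7*e1) (b+4*c) c = 343 * (7^(3*n) * w) := by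
      rw [← he]; exact h'
    have hf3 : (7:ℤ_[7]) * ((b+4*c)^3) = 7 * (7 * ((c^3 - 2*(b+4*c)*c^2 + (b+4*c)^2*c
        + 14*e1*c^2 - 11*e1*(b+4*c)*c + 2*e1*(b+4*c)^2 + 21*e1^2*c - 7*e1^2*(b+4*c)
        + 7*e1^3) - 7 * (7^(3*n) * w))) := by
      simp only [normFormPi] at h2
      linear_combination -h2
    obtain ⟨f1, hf⟩ : (7:ℤ_[7]) ∣ (b+4*c) :=
      seven_dvd_of_dvd_cube ⟨_, mul_left_cancel₀ seven_ne_zero hf3⟩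
    -- step 3 : 7 ∣ g
    have h3 : normFormPi (7*e1) (7*f1) c = 343 * (7^(3*n) * w) := by
      rw [← hf]; exact h2
    have hg3 : (343:ℤ_[7]) * (c^3) = 343 * (7 * ((7^(3*n) * w) - (-2*f1*c^2
        + 7*f1^2*c - 7*f1^3 + 2*e1*c^2 - 11*e1*f1*c + 14*e1*f1^2 + 3*e1^2*c
        - 7*e1^2*f1 + e1^3))) := by
      simp only [normFormPi] at h3
      linear_combination 7*h3
    have h343 : (343:ℤ_[7]) ≠ 0 := by
      have h7 : (343:ℤ_[7]) = 7^3 := by norm_num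
      rw [h7]; exact pow_ne_zero 3 seven_ne_zero
    obtain ⟨g1, hg⟩ : (7:ℤ_[7]) ∣ c :=
      seven_dvd_of_dvd_cube ⟨_, mul_left_cancel₀ h343 hg3⟩
    -- descend
    apply ih (e1 - 2*f1 + 4*g1) (f1 - 4*g1) g1
    have ha : a = 7 * (e1 - 2*f1 + 4*g1) := by linear_combination he - 2*hf + 4*hg
    have hb : b = 7 * (f1 - 4*g1) := by linear_combination hf - 4*hg
    have hcube : normForm a b c = 343 * normForm (e1 - 2*f1 + 4*g1) (f1 - 4*g1) g1 := by
      rw [ha, hb, hg]; simp only [normForm]; ring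
    apply mul_left_cancel₀ h343
    rw [← hcube, h]
    ring

instance fact3 : Fact (Nat.Prime 3) := ⟨by norm_num⟩

lemma norm_seven : ‖(7:ℚ_[7])‖ = (7:ℝ)⁻¹ := by
  have h := Padic.norm_p (p := 7)
  simpa using h

lemma scale_mono {m n : ℕ} (h : m ≤ n) (x : ℚ_[7]) (hx : ‖(7:ℚ_[7])^m * x‖ ≤ 1) :
    ‖(7:ℚ_[7])^n * x‖ ≤ 1 := by
  have key : (7:ℚ_[7])^n * x = 7^(n-m) * (7^m * x) := by
    rw [← mul_assoc, ← pow_add]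
    congr 2
    omega
  rw [key, norm_mul, norm_pow, norm_seven]
  calc ((7:ℝ)⁻¹)^(n-m) * ‖(7:ℚ_[7])^m * x‖ ≤ 1 * 1 := by
        apply mul_le_mul _ hx (norm_nonneg _) zero_le_one
        apply pow_le_one₀ (by norm_num) (by norm_num)
    _ = 1 := by norm_num

lemma exists_scale (x : ℚ_[7]) : ∃ n : ℕ, ‖(7:ℚ_[7])^n * x‖ ≤ 1 := by
  obtain ⟨n, hn⟩ := exists_nat_gt ‖x‖
  refine ⟨n, ?_⟩
  rw [norm_mul, norm_pow, norm_seven]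
  have h1 : ‖x‖ ≤ (7:ℝ)^n := by
    calc ‖x‖ ≤ n := hn.le
      _ ≤ (7:ℝ)^n := by
        have := Nat.lt_pow_self (show 1 < 7 by norm_num) (n := n)
        exact_mod_cast this.le
  have h2 : (0:ℝ) < 7^n := by positivity
  calc ((7:ℝ)⁻¹)^n * ‖x‖ ≤ ((7:ℝ)⁻¹)^n * (7:ℝ)^n := by
        apply mul_le_mul_of_nonneg_left h1 (by positivity)
    _ = 1 := by
        rw [← mul_pow]; norm_num

lemma qadic_key (w a b c : ℚ_[7]) (hw : w^2 + w + 1 = 0) : normForm a b c ≠ w := by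
  intro h
  have hw3 : w^3 = 1 := by linear_combination (w - 1) * hw
  have hwn : ‖w‖ = 1 := by
    have h1 : ‖w‖^3 = 1 := by rw [← norm_pow, hw3, norm_one]
    have h2 : (‖w‖ - 1) * (‖w‖^2 + ‖w‖ + 1) = 0 := by linear_combination h1
    have h3 : ‖w‖^2 + ‖w‖ + 1 > 0 := by positivity
    have := mul_eq_zero.mp h2
    rcases this with h4 | h4
    · linarith
    · linarith
  obtain ⟨n₁, h₁⟩ := exists_scale a
  obtain ⟨n₂, h₂⟩ := exists_scale b
  obtain ⟨n₃, h₃⟩ := exists_scale c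
  set n := max n₁ (max n₂ n₃) with hn
  have hA := scale_mono (n := n) (le_max_left _ _) a h₁
  have hB := scale_mono (n := n) (le_trans (le_max_left _ _) (le_max_right n₁ _)) b h₂
  have hC := scale_mono (n := n) (le_trans (le_max_right _ _) (le_max_right n₁ _)) c h₃
  set A : ℤ_[7] := ⟨7^n * a, hA⟩ with hAdef
  set B : ℤ_[7] := ⟨7^n * b, hB⟩ with hBdef
  set C : ℤ_[7] := ⟨7^n * c, hC⟩ with hCdef
  set W : ℤ_[7] := ⟨w, hwn.le⟩ with hWdef
  have hWz : W^2 + W + 1 = 0 := Subtype.ext hw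
  have hF : normForm A B C = 7^(3*n) * W := by
    apply Subtype.ext
    show normForm ((7:ℚ_[7])^n * a) ((7:ℚ_[7])^n * b) ((7:ℚ_[7])^n * c)
        = (7:ℚ_[7])^(3*n) * w
    rw [← h]
    simp only [normForm]
    ring
  exact padic_key W hWz n A B C hF

lemma exists_omega : ∃ z : ℤ_[7], z^2 + z + 1 = 0 := by
  have hnorm : ‖(X^2 + X + 1 : ℤ_[7][X]).eval 2‖ <
      ‖(X^2 + X + 1 : ℤ_[7][X]).derivative.eval 2‖^2 := by
    have he : (X^2 + X + 1 : ℤ_[7][X]).eval 2 = 7 := by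
      simp only [eval_add, eval_pow, eval_X, eval_one]
      norm_num
    have hd : (X^2 + X + 1 : ℤ_[7][X]).derivative.eval 2 = 5 := by
      simp only [derivative_add, derivative_one, derivative_X, derivative_X_pow]
      simp only [eval_add, eval_mul, eval_pow, eval_X, eval_one, eval_zero,
        eval_natCast, eval_ofNat, add_zero, eval_C]
      norm_num
    rw [he, hd]
    have h7 : ‖(7:ℤ_[7])‖ = (7:ℝ)⁻¹ := by
      have := PadicInt.norm_p (p := 7); simpa using this
    have h5 : ‖(5:ℤ_[7])‖ = 1 := by
      apply le_antisymm (PadicInt.norm_le_one _)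
      by_contra hlt
      push_neg at hlt
      have h5' : ‖((5:ℤ):ℤ_[7])‖ < 1 := by norm_num at hlt ⊢; exact hlt
      rw [PadicInt.norm_int_lt_one_iff_dvd] at h5'
      norm_num at h5'
    rw [h7, h5]
    norm_num
  obtain ⟨z, hz, -⟩ := hensels_lemma hnorm
  refine ⟨z, ?_⟩
  simpa only [map_add, map_pow, aeval_X, map_one] using hz

lemma K_key (ξ a b c : CyclotomicField 3 ℚ) (hξ : ξ^2 + ξ + 1 = 0) :
    normForm a b c ≠ ξ := by
  obtain ⟨z, hz⟩ := exists_omega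
  have hω : (z:ℚ_[7])^2 + (z:ℚ_[7]) + 1 = 0 := by exact_mod_cast congrArg _ hz
  have hC : (C ((z:ℚ_[7])) : ℚ_[7][X])^2 + C ((z:ℚ_[7])) + 1 = 0 := by
    have := congrArg (⇑(Polynomial.C (R := ℚ_[7]))) hω
    simpa [map_add, map_pow, map_one, map_zero] using this
  have hfac : cyclotomic 3 ℚ_[7] = (X - C ((z:ℚ_[7]))) * (X - C ((z:ℚ_[7])^2)) := by
    rw [Polynomial.cyclotomic_prime ℚ_[7] 3]
    simp only [Finset.sum_range_succ, Finset.sum_range_zero, pow_zero, pow_one,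
      zero_add, map_pow]
    linear_combination (X + 1 - C ((z:ℚ_[7]))) * hC
  have hsplit : Splits ((cyclotomic 3 ℚ).map (algebraMap ℚ ℚ_[7])) := by
    rw [map_cyclotomic, hfac]
    exact (Splits.X_sub_C _).mul (Splits.X_sub_C _)
  haveI : IsSplittingField ℚ (CyclotomicField 3 ℚ) (cyclotomic 3 ℚ) :=
    @IsCyclotomicExtension.splitting_field_cyclotomic 3 _ ℚ (CyclotomicField 3 ℚ) _ _ _
      (CyclotomicField.isCyclotomicExtension 3 ℚ)
  let φ : CyclotomicField 3 ℚ →+* ℚ_[7] :=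
    (IsSplittingField.lift (CyclotomicField 3 ℚ) (cyclotomic 3 ℚ) hsplit).toRingHom
  intro h
  have h1 := congrArg φ h
  have h2 := congrArg φ hξ
  simp only [normForm, map_add, map_sub, map_mul, map_pow, map_ofNat, map_one,
    map_zero] at h1 h2
  refine qadic_key (φ ξ) (φ a) (φ b) (φ c) h2 ?_
  simp only [normForm]
  exact h1


/-- for L = ℚ(ζ₇ + ζ₇⁻¹, ζ₃), a cubic cyclic extension of
K = ℚ(ζ₃) generated by θ = ζ₇ + ζ₇⁻¹ (a root of X³ + X² - 2X - 1), neither ζ₃ nor ζ₃²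
is a norm from L to K; hence the cyclic algebra (L/K, σ, ζ₃) is a division algebra. -/
theorem zeta3_not_a_norm
    {L : Type*} [Field L] [Algebra (CyclotomicField 3 ℚ) L]
    [IsGalois (CyclotomicField 3 ℚ) L]
    (hrank : Module.finrank (CyclotomicField 3 ℚ) L = 3)
    (θ : L) (hθ : θ ^ 3 + θ ^ 2 - 2 * θ - 1 = 0)
    (hgen : Algebra.adjoin (CyclotomicField 3 ℚ) {θ} = ⊤)
    (ζ : CyclotomicField 3 ℚ) (hζ : IsPrimitiveRoot ζ 3) :
    ∀ y : L, Algebra.norm (CyclotomicField 3 ℚ) y ≠ ζ ∧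
      Algebra.norm (CyclotomicField 3 ℚ) y ≠ ζ ^ 2 := by
  classical
  intro y
  -- properties of ζ
  have hζ3 : ζ^3 = 1 := hζ.pow_eq_one
  have hζne : ζ ≠ 1 := hζ.ne_one (by norm_num)
  have hζq : ζ^2 + ζ + 1 = 0 := by
    have h0 : (ζ - 1) * (ζ^2 + ζ + 1) = 0 := by linear_combination hζ3
    rcases mul_eq_zero.mp h0 with h1 | h1
    · exact absurd (by linear_combination h1) hζne
    · exact h1
  have hζq2 : (ζ^2)^2 + ζ^2 + 1 = 0 := by linear_combination hζq + ζ*hζ3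
  -- finite dimensionality
  haveI : FiniteDimensional (CyclotomicField 3 ℚ) L :=
    FiniteDimensional.of_finrank_pos (by rw [hrank]; norm_num)
  -- the cubic polynomial
  set m : (CyclotomicField 3 ℚ)[X] := X^3 + X^2 - C 2 * X - C 1 with hm
  have hmm : m.Monic := by
    rw [hm]
    monicity!
  have hmdeg : m.degree = 3 := by rw [hm]; compute_degree!
  have haev : aeval θ m = 0 := by
    rw [hm]
    simp only [map_add, map_sub, map_mul, map_pow, aeval_X, aeval_C, map_one,
      map_ofNat]
    linear_combination hθ
  have hint : IsIntegral (CyclotomicField 3 ℚ) θ := ⟨m, hmm, haev⟩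
  -- coordinates of y
  obtain ⟨p, hp⟩ : ∃ p, aeval θ p = y := by
    have hmem : y ∈ Algebra.adjoin (CyclotomicField 3 ℚ) {θ} := by
      rw [hgen]; exact Algebra.mem_top
    rwa [Algebra.adjoin_singleton_eq_range_aeval, AlgHom.mem_range] at hmem
  have hyr : aeval θ (p %ₘ m) = y := by
    have h2 := congrArg (aeval θ) (modByMonic_add_div p m)
    simp only [map_add, map_mul, haev, zero_mul, add_zero] at h2
    rw [h2, hp]
  have hrdeg : (p %ₘ m).natDegree < 3 := by
    by_cases h0 : p %ₘ m = 0
    · rw [h0]; simp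
    · have := degree_modByMonic_lt p hmm
      rw [hmdeg] at this
      exact (natDegree_lt_iff_degree_lt h0).mpr this
  set a := (p %ₘ m).coeff 0 with ha
  set b := (p %ₘ m).coeff 1 with hb
  set c := (p %ₘ m).coeff 2 with hc
  have hexp : y = algebraMap _ L a + algebraMap _ L b * θ + algebraMap _ L c * θ^2 := by
    rw [← hyr, aeval_eq_sum_range' hrdeg]
    simp only [Finset.sum_range_succ, Finset.sum_range_zero, pow_zero, pow_one,
      zero_add, Algebra.smul_def]
    ring
  -- minimal polynomial degree
  have hKtop : IntermediateField.adjoin (CyclotomicField 3 ℚ) {θ} = ⊤ :=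
    IntermediateField.adjoin_eq_top_of_algebra _ _ hgen
  have hmindeg : (minpoly (CyclotomicField 3 ℚ) θ).natDegree = 3 := by
    have h1 := IntermediateField.adjoin.finrank hint
    rw [hKtop, IntermediateField.finrank_top', hrank] at h1
    omega
  have hmindegd : (minpoly (CyclotomicField 3 ℚ) θ).degree = 3 := by
    rw [degree_eq_natDegree (minpoly.ne_zero hint), hmindeg]
    rfl
  have hquad : ∀ q : (CyclotomicField 3 ℚ)[X], q.degree = 2 → aeval θ q ≠ 0 := by
    intro q hq hq0
    have hqne : q ≠ 0 := fun h0 => by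
      rw [h0, degree_zero] at hq
      exact (by decide : (⊥ : WithBot ℕ) ≠ 2) hq
    have := minpoly.degree_le_of_ne_zero (CyclotomicField 3 ℚ) θ hqne hq0
    rw [hmindegd, hq] at this
    exact absurd this (by decide)
  -- distinctness of the three roots
  have d12 : θ ≠ θ^2 - 2 := by
    intro hE
    refine hquad (X^2 - X - C 2) (by compute_degree!) ?_
    simp only [map_add, map_sub, map_mul, map_pow, aeval_X, aeval_C, map_ofNat]
    linear_combination -hE
  have d13 : θ ≠ -θ^2 - θ + 1 := by
    intro hE
    refine hquad (X^2 + C 2 * X - C 1) (by compute_degree!) ?_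
    simp only [map_add, map_sub, map_mul, map_pow, aeval_X, aeval_C, map_ofNat,
      map_one]
    linear_combination hE
  have d23 : θ^2 - 2 ≠ -θ^2 - θ + 1 := by
    intro hE
    refine hquad (C 2 * X^2 + X - C 3) (by compute_degree!) ?_
    simp only [map_add, map_sub, map_mul, map_pow, aeval_X, aeval_C, map_ofNat]
    linear_combination hE
  -- automorphisms
  have hcard : Fintype.card (L ≃ₐ[CyclotomicField 3 ℚ] L) = 3 := by
    rw [← Nat.card_eq_fintype_card, IsGalois.card_aut_eq_finrank, hrank]
  have hroot : ∀ g : L ≃ₐ[CyclotomicField 3 ℚ] L,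
      g θ = θ ∨ g θ = θ^2 - 2 ∨ g θ = -θ^2 - θ + 1 := by
    intro g
    have hg : (g θ)^3 + (g θ)^2 - 2*(g θ) - 1 = 0 := by
      have h1 := congrArg g hθ
      simpa only [map_add, map_sub, map_mul, map_pow, map_one, map_ofNat,
        map_zero] using h1
    have hfac : (g θ - θ) * ((g θ - (θ^2 - 2)) * (g θ - (-θ^2 - θ + 1))) = 0 := by
      linear_combination hg - (1 - θ^2 + (g θ)*θ) * hθ
    rcases mul_eq_zero.mp hfac with h1 | h1
    · exact Or.inl (sub_eq_zero.mp h1)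
    rcases mul_eq_zero.mp h1 with h2 | h2
    · exact Or.inr (Or.inl (sub_eq_zero.mp h2))
    · exact Or.inr (Or.inr (sub_eq_zero.mp h2))
  have hinj : Function.Injective
      (fun g : L ≃ₐ[CyclotomicField 3 ℚ] L => g θ) := by
    intro g g' hgg
    have h1 : (g : L →ₐ[CyclotomicField 3 ℚ] L) = g' := by
      apply AlgHom.ext_of_adjoin_eq_top hgen
      intro x hx
      rw [Set.mem_singleton_iff] at hx
      subst hx
      exact hgg
    exact AlgEquiv.coe_algHom_injective h1
  set T : Finset L := {θ, θ^2 - 2, -θ^2 - θ + 1} with hT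
  have hTmem1 : θ ∉ ({θ^2 - 2, -θ^2 - θ + 1} : Finset L) := by
    simp only [Finset.mem_insert, Finset.mem_singleton]
    push_neg
    exact ⟨d12, d13⟩
  have hTmem2 : (θ^2 - 2 : L) ∉ ({-θ^2 - θ + 1} : Finset L) := by
    simpa only [Finset.mem_singleton] using d23
  have hTcard : T.card = 3 := by
    rw [hT, Finset.card_insert_of_notMem hTmem1,
      Finset.card_insert_of_notMem hTmem2, Finset.card_singleton]
  have hsub : Finset.image (fun g : L ≃ₐ[CyclotomicField 3 ℚ] L => g θ)
      Finset.univ ⊆ T := by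
    intro x hx
    simp only [Finset.mem_image] at hx
    obtain ⟨g, -, rfl⟩ := hx
    rcases hroot g with h | h | h <;>
      simp [hT, h, Finset.mem_insert, Finset.mem_singleton]
  have himg : Finset.image (fun g : L ≃ₐ[CyclotomicField 3 ℚ] L => g θ)
      Finset.univ = T := by
    apply Finset.eq_of_subset_of_card_le hsub
    rw [Finset.card_image_of_injective _ hinj, Finset.card_univ, hcard, hTcard]
  -- the norm computation
  have hnormmap : algebraMap (CyclotomicField 3 ℚ) L
      (Algebra.norm (CyclotomicField 3 ℚ) y)
      = algebraMap (CyclotomicField 3 ℚ) L (normForm a b c) := by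
    rw [Algebra.norm_eq_prod_automorphisms]
    have hyg : ∀ g : L ≃ₐ[CyclotomicField 3 ℚ] L,
        g y = algebraMap _ L a + algebraMap _ L b * (g θ)
          + algebraMap _ L c * (g θ)^2 := by
      intro g
      rw [hexp]
      simp only [map_add, map_mul, map_pow, AlgEquiv.commutes]
    calc (∏ g : L ≃ₐ[CyclotomicField 3 ℚ] L, g y)
        = ∏ g : L ≃ₐ[CyclotomicField 3 ℚ] L,
            (algebraMap _ L a + algebraMap _ L b * (g θ)
              + algebraMap _ L c * (g θ)^2) :=
          Finset.prod_congr rfl (fun g _ => hyg g)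
      _ = ∏ t ∈ T, (algebraMap _ L a + algebraMap _ L b * t
              + algebraMap _ L c * t^2) := by
          rw [← himg, Finset.prod_image (fun g _ g' _ h => hinj h)]
      _ = algebraMap (CyclotomicField 3 ℚ) L (normForm a b c) := by
          rw [hT, Finset.prod_insert hTmem1, Finset.prod_insert hTmem2,
            Finset.prod_singleton]
          simp only [normForm, map_add, map_sub, map_mul, map_pow, map_one,
            map_ofNat]
          set A := algebraMap (CyclotomicField 3 ℚ) L a
          set B := algebraMap (CyclotomicField 3 ℚ) L b
          set CC := algebraMap (CyclotomicField 3 ℚ) L c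
          linear_combination (CC^3 - 2*CC^3*θ + CC^3*θ^2 + 5*CC^3*θ^3 - 3*CC^3*θ^4
            - 4*CC^3*θ^5 + CC^3*θ^6 + CC^3*θ^7 - 2*B*CC^2 + 4*B*CC^2*θ^2
            - 2*B*CC^2*θ^3 - 3*B*CC^2*θ^4 + B*CC^2*θ^5 + B*CC^2*θ^6 - B^2*CC
            + B^2*CC*θ^2 + B^3 - B^3*θ^2 + 2*A*CC^2 + 4*A*CC^2*θ - 3*A*CC^2*θ^2
            - 2*A*CC^2*θ^3 + A*CC^2*θ^4 + A*CC^2*θ^5 - 3*A*B*CC + A*B*CC*θ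
            + 3*A*B*CC*θ^2 - A*B^2*θ + 2*A^2*CC*θ) * hθ
  have hnorm : Algebra.norm (CyclotomicField 3 ℚ) y = normForm a b c :=
    (algebraMap (CyclotomicField 3 ℚ) L).injective hnormmap
  constructor
  · rw [hnorm]; exact K_key ζ a b c hζq
  · rw [hnorm]; exact K_key (ζ^2) a b c hζq2
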